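/- arXiv:2206.01143 — 2 statements merged into one kernel-verified Lean document; each statement's English description precedes it below -/
import Mathlib

section
/- Let k be a field and m, p ≥ 1. Let f : Fin m → Polynomial k be of the form f γ = X^(p+γ) + g γ where each g γ has degree < p. Then natDegree (Wr f) ≤ m*p and the coefficient of X^(m*p) in Wr(f) equals ((∏_{r=1}^{m−1} r!) : ℕ) cast into k; in particular this coefficient does not depend on the perturbations g γ. -/
open Polynomial

/-- The Wronskian of a family `f : Fin m → Polynomial k`. -/
noncomputable def Wr {k : Type*} [Field k] {m : ℕ} (f : Fin m → Polynomial k) : Polynomial k :=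
  Matrix.det (Matrix.of fun i j : Fin m => Polynomial.derivative^[(i : ℕ)] (f j))

private lemma coeff_prod_of_natDegree_le' {R : Type*} [CommSemiring R] {ι : Type*}
    (s : Finset ι) (f : ι → R[X]) (d : ι → ℕ) (h : ∀ i ∈ s, (f i).natDegree ≤ d i) :
    (∏ i ∈ s, f i).coeff (∑ i ∈ s, d i) = ∏ i ∈ s, (f i).coeff (d i) := by
  induction s using Finset.cons_induction with
  | empty => simp
  | cons a s ha ih =>
    rw [Finset.prod_cons, Finset.sum_cons, Finset.prod_cons,
      coeff_mul_add_eq_of_natDegree_le (h a (Finset.mem_cons_self a s))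
        ((natDegree_prod_le _ _).trans (Finset.sum_le_sum fun i hi =>
          h i (Finset.mem_cons_of_mem hi))),
      ih fun i hi => h i (Finset.mem_cons_of_mem hi)]

set_option maxHeartbeats 1600000 in
theorem wronskian_leading_coeff_of_perturbed_monomials {k : Type*} [Field k] (m p : ℕ)
    (hm : 1 ≤ m) (hp : 1 ≤ p)
    (f g : Fin m → Polynomial k)
    (hf : ∀ γ : Fin m, f γ = Polynomial.X ^ (p + (γ : ℕ)) + g γ)
    (hg : ∀ γ : Fin m, (g γ).degree < p) :
    (Wr f).natDegree ≤ m * p ∧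
      (Wr f).coeff (m * p) = ((∏ r ∈ Finset.Icc 1 (m - 1), Nat.factorial r : ℕ) : k) := by
  set M : Matrix (Fin m) (Fin m) k[X] :=
    Matrix.of fun i j : Fin m => Polynomial.derivative^[(i : ℕ)] (f j) with hM
  -- natDegree of f j is at most p + j
  have hfd : ∀ j : Fin m, (f j).natDegree ≤ p + j := by
    intro j
    rw [hf j]
    refine natDegree_add_le_of_degree_le (by simp) ?_
    exact natDegree_le_of_degree_le ((hg j).le.trans (by exact_mod_cast le_self_add))
  -- top coefficient of f j
  have hftop : ∀ j : Fin m, (f j).coeff (p + j) = 1 := by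
    intro j
    rw [hf j, coeff_add, coeff_X_pow, if_pos rfl,
      coeff_eq_zero_of_degree_lt ((hg j).trans_le (by exact_mod_cast le_self_add)), add_zero]
  -- entry degree bounds
  have hdeg : ∀ i j : Fin m, (M i j).natDegree ≤ p + (j : ℕ) - i := fun i j =>
    (natDegree_iterate_derivative _ _).trans (Nat.sub_le_sub_right (hfd j) _)
  -- entry coefficients at the top
  have hcoeff : ∀ i j : Fin m, (M i j).coeff (p + (j : ℕ) - i) =
      ((Nat.descFactorial (p + j) i : ℕ) : k) := by
    intro i j
    rw [hM, Matrix.of_apply, coeff_iterate_derivative]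
    rcases le_or_gt (i : ℕ) (p + j) with h | h
    · rw [Nat.sub_add_cancel h, hftop j, nsmul_eq_mul, mul_one]
    · rw [Nat.sub_eq_zero_of_le h.le, zero_add,
        coeff_eq_zero_of_natDegree_lt ((hfd j).trans_lt h), smul_zero,
        Nat.descFactorial_eq_zero_iff_lt.mpr h, Nat.cast_zero]
  -- per-permutation analysis
  have key : ∀ σ : Equiv.Perm (Fin m),
      (∏ i, M (σ i) i).natDegree ≤ m * p ∧
        (∏ i, M (σ i) i).coeff (m * p) =
          ∏ i : Fin m, ((Nat.descFactorial (p + (i : ℕ)) ((σ i : ℕ)) : ℕ) : k) := by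
    intro σ
    by_cases h : ∀ i : Fin m, (σ i : ℕ) ≤ p + i
    · have hsum : ∑ i : Fin m, (p + (i : ℕ) - σ i) = m * p := by
        have h1 : ∑ i : Fin m, ((p + (i : ℕ) - σ i) + (σ i : ℕ)) =
            ∑ i : Fin m, (p + (i : ℕ)) :=
          Finset.sum_congr rfl fun i _ => Nat.sub_add_cancel (h i)
        have h2 : ∑ i : Fin m, ((σ i : ℕ)) = ∑ i : Fin m, (i : ℕ) :=
          Equiv.sum_comp σ _
        rw [Finset.sum_add_distrib, h2, Finset.sum_add_distrib] at h1
        simpa [Finset.card_univ] using Nat.add_right_cancel h1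
      have hdle : ∀ i : Fin m, (M (σ i) i).natDegree ≤ p + (i : ℕ) - σ i :=
        fun i => hdeg (σ i) i
      constructor
      · exact (natDegree_prod_le _ _).trans <|
          (Finset.sum_le_sum fun i _ => hdle i).trans_eq hsum
      · rw [← hsum, coeff_prod_of_natDegree_le' _ _ _ fun i _ => hdle i]
        exact Finset.prod_congr rfl fun i _ => hcoeff (σ i) i
    · push_neg at h
      obtain ⟨i, hi⟩ := h
      have hzero : M (σ i) i = 0 := by
        rw [hM, Matrix.of_apply]
        exact iterate_derivative_eq_zero ((hfd i).trans_lt hi)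
      have hprod : (∏ j, M (σ j) j) = 0 :=
        Finset.prod_eq_zero (Finset.mem_univ i) hzero
      rw [hprod]
      refine ⟨by simp, ?_⟩
      rw [Finset.prod_eq_zero (Finset.mem_univ i)
        (by rw [Nat.descFactorial_eq_zero_iff_lt.mpr hi, Nat.cast_zero]), coeff_zero]
  have hWr : Wr f = ∑ σ : Equiv.Perm (Fin m),
      (((Equiv.Perm.sign σ : ℤ) : k[X])) * ∏ i, M (σ i) i :=
    Matrix.det_apply' _
  constructor
  · rw [hWr]
    refine natDegree_sum_le_of_forall_le _ _ fun σ _ => ?_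
    refine (natDegree_mul_le).trans ?_
    rw [natDegree_intCast, zero_add]
    exact (key σ).1
  · have step1 : (Wr f).coeff (m * p) =
        (Matrix.of fun i j : Fin m =>
          ((Nat.descFactorial (p + j) i : ℕ) : k)).det := by
      rw [hWr, finset_sum_coeff, Matrix.det_apply']
      refine Finset.sum_congr rfl fun σ _ => ?_
      rw [← C_eq_intCast, coeff_C_mul, (key σ).2]
      rfl
    rw [step1]
    -- relate to a Vandermonde determinant
    have step2 : (Matrix.of fun i j : Fin m =>
        ((Nat.descFactorial (p + j) i : ℕ) : k)).det =
        (Matrix.of fun i j : Fin m =>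
          (descPochhammer k (j : ℕ)).eval (((p + (i : ℕ) : ℕ)) : k)).det := by
      rw [← Matrix.det_transpose]
      congr 1
      ext i j
      simp only [Matrix.transpose_apply, Matrix.of_apply,
        descPochhammer_eval_eq_descFactorial]
    rw [step2, ← Matrix.det_eval_matrixOfPolynomials_eq_det_vandermonde
      (fun i : Fin m => (((p + (i : ℕ) : ℕ)) : k))
      (fun i => descPochhammer k i)
      (fun i => descPochhammer_natDegree k i)
      (fun i => monic_descPochhammer k i)]
    have step3 : (fun i : Fin m => (((p + (i : ℕ) : ℕ)) : k)) =
        fun i : Fin m => ((i : ℕ) : k) + (p : k) := by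
      funext i; push_cast; ring
    rw [step3, Matrix.det_vandermonde_add]
    obtain ⟨m', rfl⟩ : ∃ m', m = m' + 1 := ⟨m - 1, (Nat.succ_pred_eq_of_pos hm).symm⟩
    rw [Matrix.det_vandermonde_id_eq_superFactorial m', Nat.add_sub_cancel,
      Nat.prod_Icc_factorial]
end

section
/- Let k be a field and n ≥ 1 with (n−1)! ≠ 0 in k, and let s ∈ k. Then the family (γ_j(s))_{j ∈ Fin n} is a basis of the k-vector space of polynomials of degree < n (Polynomial.degreeLT k n); in particular it is linearly independent over k. -/
open Polynomial

/-- The `j`-th derivative of the rational normal curve `γ(s) = ∑_{r<n} s^r X^r`. -/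
noncomputable def gammaDeriv {k : Type*} [Field k] (n : ℕ) (s : k) (j : ℕ) : Polynomial k :=
  ∑ r ∈ Finset.range n, Polynomial.C ((Nat.descFactorial r j : k) * s ^ (r - j)) * Polynomial.X ^ r

theorem gammaDeriv_mem {k : Type*} [Field k] (n : ℕ) (s : k) (j : ℕ) :
    gammaDeriv n s j ∈ Polynomial.degreeLT k n := by
  apply Submodule.sum_mem
  intro r hr
  apply mem_degreeLT.2
  calc degree _ ≤ r := degree_C_mul_X_pow_le r _
    _ < n := by exact_mod_cast Nat.cast_lt.2 (Finset.mem_range.1 hr)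

theorem gammaDeriv_coeff {k : Type*} [Field k] (n : ℕ) (s : k) (j : ℕ) (r : Fin n) :
    (gammaDeriv n s j).coeff r = (Nat.descFactorial r j : k) * s ^ ((r : ℕ) - j) := by
  rw [gammaDeriv, Polynomial.finset_sum_coeff]
  rw [Finset.sum_eq_single (r : ℕ)]
  · rw [coeff_C_mul, coeff_X_pow, if_pos rfl, mul_one]
  · intro b _ hb
    rw [coeff_C_mul, coeff_X_pow, if_neg (by omega), mul_zero]
  · intro h
    exact absurd (Finset.mem_range.2 r.isLt) h

theorem gammaDeriv_basis {k : Type*} [Field k] (n : ℕ) (hn : 1 ≤ n)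
    (hfac : ((Nat.factorial (n - 1) : k) ≠ 0)) (s : k) :
    (∃ b : Module.Basis (Fin n) k (Polynomial.degreeLT k n),
        ∀ j : Fin n, (b j : Polynomial k) = gammaDeriv n s (j : ℕ)) ∧
      LinearIndependent k (fun j : Fin n => gammaDeriv (k := k) n s (j : ℕ)) := by
  -- factorials of j ≤ n-1 are nonzero
  have hfj : ∀ j : Fin n, ((Nat.factorial j : k) ≠ 0) := by
    intro j
    have hd : (Nat.factorial j) ∣ Nat.factorial (n - 1) :=
      Nat.factorial_dvd_factorial (by omega)
    obtain ⟨m, hm⟩ := hd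
    intro h
    apply hfac
    rw [hm, Nat.cast_mul, h, zero_mul]
  -- the coefficient matrix
  set A : Matrix (Fin n) (Fin n) k :=
    Matrix.of fun j r => (Nat.descFactorial r j : k) * s ^ ((r : ℕ) - (j : ℕ)) with hA
  have hAtri : A.BlockTriangular id := by
    intro j r hlt
    have h2 : (r : ℕ) < (j : ℕ) := hlt
    simp [hA, Nat.descFactorial_eq_zero_iff_lt.2 h2]
  have hAunit : IsUnit A := by
    rw [Matrix.isUnit_iff_isUnit_det, Matrix.det_of_upperTriangular hAtri,
      isUnit_iff_ne_zero, Finset.prod_ne_zero_iff]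
    intro j _
    simp only [hA, Matrix.of_apply, Nat.descFactorial_self, Nat.sub_self, pow_zero, mul_one]
    exact hfj j
  have hli : LinearIndependent k (fun j : Fin n => A j) :=
    Matrix.linearIndependent_rows_iff_isUnit.2 hAunit
  -- the family in degreeLT
  set v : Fin n → Polynomial.degreeLT k n :=
    fun j => ⟨gammaDeriv n s (j : ℕ), gammaDeriv_mem n s j⟩ with hv
  have hev : (fun j => (Polynomial.degreeLTEquiv k n) (v j)) = fun j => A j := by
    funext j
    funext r
    simpa [Polynomial.degreeLTEquiv, hv, hA] using gammaDeriv_coeff n s (j : ℕ) r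
  have hliv : LinearIndependent k v := by
    have := hli
    rw [← hev] at this
    exact LinearIndependent.of_comp (Polynomial.degreeLTEquiv k n).toLinearMap this
  constructor
  · have hcard : Fintype.card (Fin n) = Module.finrank k (Polynomial.degreeLT k n) := by
      rw [(Polynomial.degreeLTEquiv k n).finrank_eq]
      simp
    haveI : Nonempty (Fin n) := ⟨⟨0, hn⟩⟩
    refine ⟨basisOfLinearIndependentOfCardEqFinrank hliv hcard, ?_⟩
    intro j
    rw [coe_basisOfLinearIndependentOfCardEqFinrank]
  · have := hliv.map' (Polynomial.degreeLT k n).subtype (Submodule.ker_subtype _)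
    exact this
end
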